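/- Let f(x) = xᵀAx − 2aᵀx + θ be a convex quadratic function on ℝⁿ with A positive semidefinite and A ≠ 0. Then (graph f)• equals the epigraph of f, where graph f = {(x, f(x)) : x ∈ ℝⁿ} ⊆ ℝⁿ⁺¹ and (graph f)• is the set of convex combinations of pairs of points of graph f. -/

import Mathlib

open Matrix

/-- The set of convex combinations of pairs of points of `D`. -/
def bullet {V : Type*} [AddCommGroup V] [Module ℝ V] (D : Set V) : Set V :=
  {x | ∃ u ∈ D, ∃ v ∈ D, ∃ l : ℝ, 0 ≤ l ∧ l ≤ 1 ∧ x = l • u + (1 - l) • v}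

lemma key {n : ℕ} (A : Matrix (Fin n) (Fin n) ℝ)
    (a : Fin n → ℝ) (θ : ℝ) (f : (Fin n → ℝ) → ℝ)
    (hf : ∀ x, f x = x ⬝ᵥ A.mulVec x - 2 * (a ⬝ᵥ x) + θ)
    (u v : Fin n → ℝ) (l : ℝ) :
    l * f u + (1 - l) * f v - f (l • u + (1 - l) • v)
      = l * (1 - l) * ((u - v) ⬝ᵥ A.mulVec (u - v)) := by
  simp only [hf, mulVec_add, mulVec_smul, mulVec_sub, dotProduct_add, add_dotProduct,
    dotProduct_sub, sub_dotProduct, smul_dotProduct, dotProduct_smul, smul_eq_mul]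
  ring

lemma exists_quad_pos {n : ℕ} (A : Matrix (Fin n) (Fin n) ℝ)
    (hA : A.PosSemidef) (hA0 : A ≠ 0) : ∃ d, 0 < d ⬝ᵥ A.mulVec d := by
  by_contra h
  push_neg at h
  obtain ⟨B, rfl⟩ : ∃ B : Matrix (Fin n) (Fin n) ℝ, A = Bᴴ * B := by
    open scoped MatrixOrder in
    exact CStarAlgebra.nonneg_iff_eq_star_mul_self.mp hA.nonneg
  apply hA0
  have hB : B = 0 := by
    ext i j
    have h1 : B.mulVec (Pi.single j 1) = 0 := by
      have h2 := h (Pi.single j 1)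
      have h3 : 0 ≤ (Pi.single j 1 : Fin n → ℝ) ⬝ᵥ (Bᴴ * B).mulVec (Pi.single j 1) := by
        simpa using hA.dotProduct_mulVec_nonneg (Pi.single j 1)
      have h4 : (Pi.single j 1 : Fin n → ℝ) ⬝ᵥ (Bᴴ * B).mulVec (Pi.single j 1)
          = B.mulVec (Pi.single j 1) ⬝ᵥ B.mulVec (Pi.single j 1) := by
        rw [← mulVec_mulVec, dotProduct_mulVec, ← mulVec_transpose]
        rfl
      rw [← dotProduct_self_eq_zero]
      rw [h4] at h2 h3
      linarith
    have := congrFun h1 i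
    simpa [mulVec_single] using this
  simp [hB]

theorem stmt4 (n : ℕ) (A : Matrix (Fin n) (Fin n) ℝ) (a : Fin n → ℝ) (θ : ℝ)
    (hA : A.PosSemidef) (hA0 : A ≠ 0)
    (f : (Fin n → ℝ) → ℝ)
    (hf : ∀ x, f x = x ⬝ᵥ A.mulVec x - 2 * (a ⬝ᵥ x) + θ) :
    bullet {p : (Fin n → ℝ) × ℝ | p.2 = f p.1} = {p : (Fin n → ℝ) × ℝ | f p.1 ≤ p.2} := by
  ext p
  constructor
  · rintro ⟨u, hu, v, hv, l, hl0, hl1, rfl⟩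
    simp only [Set.mem_setOf_eq] at hu hv ⊢
    have hk := key A a θ f hf u.1 v.1 l
    have hq : 0 ≤ (u.1 - v.1) ⬝ᵥ A.mulVec (u.1 - v.1) := by
      simpa using hA.dotProduct_mulVec_nonneg (u.1 - v.1)
    have hll : 0 ≤ l * (1 - l) := mul_nonneg hl0 (by linarith)
    have : f (l • u.1 + (1 - l) • v.1) ≤ l * f u.1 + (1 - l) * f v.1 := by
      nlinarith [mul_nonneg hll hq]
    simpa [Prod.fst, Prod.snd, hu, hv, smul_eq_mul] using this
  · intro hp
    simp only [Set.mem_setOf_eq] at hp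
    obtain ⟨d, hd⟩ := exists_quad_pos A hA hA0
    set c : ℝ := d ⬝ᵥ A.mulVec d with hc
    set s : ℝ := Real.sqrt ((p.2 - f p.1) / c) with hs
    have hs2 : s ^ 2 = (p.2 - f p.1) / c := by
      rw [hs, Real.sq_sqrt (div_nonneg (by linarith) hd.le)]
    refine ⟨(p.1 + s • d, f (p.1 + s • d)), rfl, (p.1 - s • d, f (p.1 - s • d)), rfl,
      1/2, by norm_num, by norm_num, ?_⟩
    have hx : (1/2 : ℝ) • (p.1 + s • d) + (1 - 1/2 : ℝ) • (p.1 - s • d) = p.1 := by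
      ext i; simp; ring
    have hk := key A a θ f hf (p.1 + s • d) (p.1 - s • d) (1/2)
    rw [hx] at hk
    have hdiff : (p.1 + s • d) - (p.1 - s • d) = (2 * s) • d := by
      ext i; simp; ring
    rw [hdiff] at hk
    have hq : ((2 * s) • d) ⬝ᵥ A.mulVec ((2 * s) • d) = 4 * s ^ 2 * c := by
      simp [mulVec_smul, smul_dotProduct, dotProduct_smul, smul_eq_mul, hc]; ring
    rw [hq] at hk
    have hcne : c ≠ 0 := ne_of_gt hd
    have h2 : (1/2 : ℝ) * f (p.1 + s • d) + (1 - 1/2) * f (p.1 - s • d)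
        = f p.1 + (p.2 - f p.1) := by
      have : (1/2 : ℝ) * (1 - 1/2) * (4 * s ^ 2 * c) = p.2 - f p.1 := by
        rw [hs2]; field_simp; ring
      linarith [hk, this]
    have : p = ((1/2 : ℝ) • ((p.1 + s • d), f (p.1 + s • d))
        + (1 - 1/2 : ℝ) • ((p.1 - s • d), f (p.1 - s • d)) : (Fin n → ℝ) × ℝ) := by
      apply Prod.ext
      · simpa using hx.symm
      · simp only [Prod.snd_add, Prod.smul_snd, smul_eq_mul]
        linarith [h2]
    exact this
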